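/- Let H and G be simple graphs, a ≠ b two vertices of H, and f : H → G a graph homomorphism with f(a) = f(b). Then for every digraph D, the map f_D : D ⋆ H → G (sending every vertex x ∈ D to f(a) and every vertex (u,v,y) to f(y)) is a graph homomorphism, so (D ⋆ H, f_D) is an object of the slice category Gra/G. -/

import Mathlib

open SimpleGraph

attribute [local instance] Classical.propDecidable

/-- The vertex set of the arrow construction `D ⋆ H`: the disjoint union of `D` and
`E(D) × (V(H) ∖ {a, b})`, where `E(D)` is the set of edges of the digraph `(D, E)` and
`a`, `b` are the two distinguished vertices of `H`. -/
def starVert (V : Type*) (a b : V) (D : Type*) (E : D → D → Prop) : Type _ :=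
  D ⊕ ({p : D × D // E p.1 p.2} × {x : V // x ≠ a ∧ x ≠ b})

/-- For an edge `(u, v)` of the digraph `(D, E)`, the map
`φ_{(u,v)} : V(H) → V(D ⋆ H)` sending `a ↦ u`, `b ↦ v`, and `x ↦ (u, v, x)` otherwise. -/
noncomputable def starPhi {V : Type*} (a b : V) {D : Type*} {E : D → D → Prop}
    (u v : D) (huv : E u v) (x : V) : starVert V a b D E :=
  if hx : x = a then Sum.inl u
  else if hx' : x = b then Sum.inl v
  else Sum.inr (⟨(u, v), huv⟩, ⟨x, hx, hx'⟩)

/-- The arrow construction `D ⋆ H` for a simple graph `H` with distinguished vertices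
`a`, `b` and a digraph `(D, E)`: the edges are exactly the pairs
`(φ_{(u,v)} s, φ_{(u,v)} t)` for `(u, v) ∈ E(D)` and `(s, t) ∈ E(H)`. -/
noncomputable def starGraph {V : Type*} (H : SimpleGraph V) (a b : V)
    (D : Type*) (E : D → D → Prop) : SimpleGraph (starVert V a b D E) :=
  SimpleGraph.fromRel (fun x y => ∃ (u v : D) (huv : E u v) (s t : V),
    H.Adj s t ∧ starPhi a b u v huv s = x ∧ starPhi a b u v huv t = y)

/-- Given a vertex map `f : V(H) → V(G)` (intended to satisfy `f a = f b`), the map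
`f_D : V(D ⋆ H) → V(G)` sending every vertex of `D` to `f a` and `(u, v, y) ↦ f y`. -/
def starMap {V W : Type*} (f : V → W) (a b : V) {D : Type*} {E : D → D → Prop} :
    starVert V a b D E → W :=
  Sum.elim (fun _ => f a) (fun p => f p.2.val)

/-- Given a digraph homomorphism `h : (D₁, E₁) → (D₂, E₂)`, the map
`h ⋆ H : V(D₁ ⋆ H) → V(D₂ ⋆ H)` sending `x ↦ h x` for `x ∈ D₁` and
`(u, v, w) ↦ (h u, h v, w)`. -/
def starMapHom {V : Type*} (a b : V) {D₁ D₂ : Type*}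
    {E₁ : D₁ → D₁ → Prop} {E₂ : D₂ → D₂ → Prop}
    (h : D₁ → D₂) (hh : ∀ u v, E₁ u v → E₂ (h u) (h v)) :
    starVert V a b D₁ E₁ → starVert V a b D₂ E₂ :=
  Sum.elim (fun x => Sum.inl (h x))
    (fun p => Sum.inr (⟨(h p.1.val.1, h p.1.val.2), hh _ _ p.1.prop⟩, p.2))

/-- Let `H` and `G` be simple graphs, `a ≠ b` two vertices of `H`, and `f : H → G` a graph
homomorphism with `f a = f b`. Then for every digraph `(D, E)` the map
`f_D : D ⋆ H → G` is a graph homomorphism, so `(D ⋆ H, f_D)` is an object of the slice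
category `Gra/G`. -/
theorem stmt5 {V W : Type*} (H : SimpleGraph V) (G : SimpleGraph W)
    (a b : V) (hab : a ≠ b) (f : H →g G) (hf : f a = f b)
    (D : Type*) (E : D → D → Prop) :
    ∀ x y : starVert V a b D E, (starGraph H a b D E).Adj x y →
      G.Adj (starMap (⇑f) a b x) (starMap (⇑f) a b y) := by
  have key : ∀ (u v : D) (huv : E u v) (s : V),
      starMap (⇑f) a b (starPhi a b u v huv s) = f s := by
    intro u v huv s
    unfold starPhi starMap
    split_ifs with h1 h2
    · simp [h1]
    · by_cases h2 : s = b
      · subst h2; simp [h1, hf]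
      · simp [h1, h2]
  intro x y hxy
  rw [_root_.starGraph, SimpleGraph.fromRel_adj] at hxy
  obtain ⟨-, h | h⟩ := hxy <;>
    obtain ⟨u, v, huv, s, t, hst, hs, ht⟩ := h
  · rw [← hs, ← ht, key, key]; exact f.map_adj hst
  · rw [← hs, ← ht, key, key]; exact (f.map_adj hst).symm
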